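/- The fixed point f of the conformation process satisfies min_j x_j ≤ f_i ≤ max_j x_j for every node i; that is, conformed profiles lie within the range of the latent profiles. -/

import Mathlib

open Finset

lemma conformed_upper
    {V : Type*} [Fintype V] [DecidableEq V] [Nonempty V]
    (G : SimpleGraph V) [DecidableRel G.Adj]
    (x f : V → ℝ)
    (hf : ∀ i, f i = (x i + ∑ j ∈ G.neighborFinset i, f j) / (1 + (G.degree i : ℝ))) :
    ∀ i, f i ≤ Finset.univ.sup' Finset.univ_nonempty x := by
  obtain ⟨i₀, -, hi₀⟩ := Finset.exists_max_image Finset.univ f Finset.univ_nonempty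
  have hd : (0 : ℝ) < 1 + (G.degree i₀ : ℝ) := by positivity
  have key : f i₀ ≤ x i₀ := by
    have h1 : f i₀ * (1 + (G.degree i₀ : ℝ)) = x i₀ + ∑ j ∈ G.neighborFinset i₀, f j := by
      rw [hf i₀]; field_simp
    have h2 : ∑ j ∈ G.neighborFinset i₀, f j ≤ (G.degree i₀ : ℝ) * f i₀ := by
      calc ∑ j ∈ G.neighborFinset i₀, f j ≤ ∑ _j ∈ G.neighborFinset i₀, f i₀ :=
            Finset.sum_le_sum (fun j _ => hi₀ j (Finset.mem_univ j))
        _ = (G.degree i₀ : ℝ) * f i₀ := by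
            rw [Finset.sum_const, nsmul_eq_mul, SimpleGraph.card_neighborFinset_eq_degree]
    nlinarith [h1, h2]
  intro i
  calc f i ≤ f i₀ := hi₀ i (Finset.mem_univ i)
    _ ≤ x i₀ := key
    _ ≤ Finset.univ.sup' Finset.univ_nonempty x :=
        Finset.le_sup' x (Finset.mem_univ i₀)

theorem conformed_profiles_within_latent_range
    {V : Type*} [Fintype V] [DecidableEq V] [Nonempty V]
    (G : SimpleGraph V) [DecidableRel G.Adj]
    (x f : V → ℝ)
    (hf : ∀ i, f i = (x i + ∑ j ∈ G.neighborFinset i, f j) / (1 + (G.degree i : ℝ))) :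
    ∀ i, Finset.univ.inf' Finset.univ_nonempty x ≤ f i
      ∧ f i ≤ Finset.univ.sup' Finset.univ_nonempty x := by
  intro i
  refine ⟨?_, conformed_upper G x f hf i⟩
  have hneg : ∀ j, (-f) j = ((-x) j + ∑ k ∈ G.neighborFinset j, (-f) k) / (1 + (G.degree j : ℝ)) := by
    intro j
    have := hf j
    simp only [Pi.neg_apply, Finset.sum_neg_distrib]
    rw [this]; ring
  have h := conformed_upper G (-x) (-f) hneg i
  have hsup : Finset.univ.sup' Finset.univ_nonempty (-x) =
      -Finset.univ.inf' Finset.univ_nonempty x := by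
    apply le_antisymm
    · exact Finset.sup'_le _ _ (fun b _ => neg_le_neg (Finset.inf'_le x (Finset.mem_univ b)))
    · rw [neg_le]
      exact Finset.le_inf' _ _ (fun b _ =>
        neg_le.mp (Finset.le_sup' (-x) (Finset.mem_univ b)))
  rw [hsup] at h
  simpa using neg_le_neg h
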